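/- For any continuously differentiable function w on [0,1], one has -‖w'‖_{L^2(0,1)}^2 ≤ (1/2) w(1)^2 - (1/4) ‖w‖_{L^2(0,1)}^2. -/

import Mathlib

/-- Poincaré-type inequality with boundary term at `x = 1`:
`-‖w'‖² ≤ (1/2) w(1)² - (1/4) ‖w‖²` for `w ∈ C¹([0,1])`. -/
theorem poincare_with_boundary
    (w : ℝ → ℝ) (hw : ContDiff ℝ 1 w) :
    -(∫ x in (0:ℝ)..1, (deriv w x)^2) ≤
      (1/2) * (w 1)^2 - (1/4) * ∫ x in (0:ℝ)..1, (w x)^2 := by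
  have hd : Differentiable ℝ w := hw.differentiable one_ne_zero
  have hdc : Continuous (deriv w) := hw.continuous_deriv le_rfl
  have hwc : Continuous w := hd.continuous
  have hgc : Continuous (fun x : ℝ => (w x)^2 + x * (2 * w x ^ 1 * deriv w x)) := by
    continuity
  have key : ∫ x in (0:ℝ)..1, ((w x)^2 + x * (2 * w x ^ 1 * deriv w x)) = (w 1)^2 := by
    have h := intervalIntegral.integral_eq_sub_of_hasDerivAt
      (f := fun x : ℝ => x * (w x)^2)
      (f' := fun x : ℝ => (w x)^2 + x * (2 * w x ^ 1 * deriv w x))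
      (fun x _ => by
        have h1 : HasDerivAt w (deriv w x) x := (hd x).hasDerivAt
        have := (hasDerivAt_id x).mul (h1.pow 2)
        simpa [Pi.mul_def, Pi.pow_def] using this)
      (hgc.intervalIntegrable 0 1)
    simpa using h
  have hmono : ∫ x in (0:ℝ)..1, ((1/2) * (w x)^2 - 2 * (deriv w x)^2) ≤
      ∫ x in (0:ℝ)..1, ((w x)^2 + x * (2 * w x ^ 1 * deriv w x)) := by
    apply intervalIntegral.integral_mono_on (by norm_num)
    · exact (Continuous.intervalIntegrable (by continuity) 0 1)
    · exact hgc.intervalIntegrable 0 1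
    · intro x hx
      obtain ⟨hx0, hx1⟩ := hx
      nlinarith [mul_nonneg hx0 (sq_nonneg (w x + 2 * deriv w x)),
        mul_nonneg (sub_nonneg.2 hx1) (sq_nonneg (w x)),
        mul_nonneg (sub_nonneg.2 hx1) (sq_nonneg (deriv w x))]
  have hsplit : ∫ x in (0:ℝ)..1, ((1/2) * (w x)^2 - 2 * (deriv w x)^2)
      = (1/2) * (∫ x in (0:ℝ)..1, (w x)^2) - 2 * ∫ x in (0:ℝ)..1, (deriv w x)^2 := by
    rw [intervalIntegral.integral_sub, intervalIntegral.integral_const_mul,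
      intervalIntegral.integral_const_mul]
    · exact (Continuous.intervalIntegrable (by continuity) 0 1)
    · exact (Continuous.intervalIntegrable (by continuity) 0 1)
  rw [hsplit, key] at hmono
  linarith
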